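/- Let k be a field, P' ⊂ Q' an inclusion of fs monoids arising as follows: Q' is the pushout in fs monoids of P' ← P → Q where P → P' and P → Q are homomorphisms of fs monoids with P → Q of Kummer type (over an algebraically closed field situation). Let Δ be the torsion subgroup of (Q')^gp. Then Δ ⊆ Q', and for every a ∈ Q' \ Δ there exists n ≥ 1 such that a^n lies in the image of P' \ {1}. -/
import Mathlib


/-- `ι : P →* G` realizes `G` as the group hull (Grothendieck group) `P^gp` of `P`. -/
def IsGp {P G : Type} [CommMonoid P] [CommGroup G] (ι : P →* G) : Prop :=
  (∀ x : G, ∃ a b : P, x = ι a * (ι b)⁻¹) ∧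
    (∀ a b : P, ι a = ι b ↔ ∃ c : P, a * c = b * c)

/-- `P` is saturated via `ι : P → P^gp`. -/
def IsSaturatedVia {P G : Type} [CommMonoid P] [CommGroup G] (ι : P →* G) : Prop :=
  Function.Injective ι ∧
    ∀ x : G, (∃ n : ℕ, 1 ≤ n ∧ x ^ n ∈ Set.range ι) → x ∈ Set.range ι

/-- `P` is fs: finitely generated and saturated. -/
def IsFsVia {P G : Type} [CommMonoid P] [CommGroup G] (ι : P →* G) : Prop :=
  Monoid.FG P ∧ IsSaturatedVia ι

/-- `h : P → Q` is of Kummer type. -/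
def IsKummer {P Q : Type} [CommMonoid P] [CommMonoid Q] (h : P →* Q) : Prop :=
  Function.Injective h ∧ ∀ a : Q, ∃ n : ℕ, 1 ≤ n ∧ a ^ n ∈ Set.range h

/-- Let `P, P', Q` be fs monoids, `h : P → Q` of Kummer type, `f : P → P'`, and let `Q'` be the
fs pushout of `P' ← P → Q`: an fs monoid with maps `i : P' → Q'`, `j : Q → Q'` satisfying
`i ∘ f = j ∘ h`, such that every element of `Q'` has a positive power of the form
`i(p')·j(q)` (`Q'` is the saturation of the image of `P' ⊕_P Q`).  Let `Δ` denote the torsion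
subgroup of `(Q')^gp`.  Then `Δ ⊆ Q'` (every torsion element of `(Q')^gp` comes from `Q'`),
and for every `a ∈ Q'` whose image in `(Q')^gp` is not in `Δ`, there exists `n ≥ 1` such that
`a^n` lies in the image of `P' \ {1}`. -/
theorem stmt_9 (P P' Q Q' G'' : Type)
    [CommMonoid P] [CommMonoid P'] [CommMonoid Q] [CommMonoid Q'] [CommGroup G'']
    (GP GP' GQ : Type) [CommGroup GP] [CommGroup GP'] [CommGroup GQ]
    (ιP : P →* GP) (ιP' : P' →* GP') (ιQ : Q →* GQ) (ι'' : Q' →* G'')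
    (hgpP : IsGp ιP) (hgpP' : IsGp ιP') (hgpQ : IsGp ιQ) (hgp'' : IsGp ι'')
    (hP : IsFsVia ιP) (hP' : IsFsVia ιP') (hQfs : IsFsVia ιQ) (hQ' : IsFsVia ι'')
    (h : P →* Q) (hK : IsKummer h) (f : P →* P')
    (i : P' →* Q') (j : Q →* Q') (hcomm : i.comp f = j.comp h)
    (hgen : ∀ a : Q', ∃ n : ℕ, 1 ≤ n ∧ ∃ (p' : P') (q : Q), a ^ n = i p' * j q) :
    (∀ x : G'', (∃ n : ℕ, 1 ≤ n ∧ x ^ n = 1) → x ∈ Set.range ι'') ∧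
    (∀ a : Q', (¬ ∃ n : ℕ, 1 ≤ n ∧ (ι'' a) ^ n = 1) →
      ∃ n : ℕ, 1 ≤ n ∧ a ^ n ∈ i '' {p' : P' | p' ≠ 1}) := by
  constructor
  · rintro x ⟨n, hn, hxn⟩
    exact hQ'.2.2 x ⟨n, hn, by rw [hxn]; exact ⟨1, map_one ι''⟩⟩
  · intro a ha
    obtain ⟨n, hn, p', q, hpq⟩ := hgen a
    obtain ⟨m, hm, p, hp⟩ := hK.2 q
    have hnm : 1 ≤ n * m := Nat.one_le_iff_ne_zero.mpr (by positivity)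
    have hij : i (f p) = j (h p) := DFunLike.congr_fun hcomm p
    have key : a ^ (n * m) = i (p' ^ m * f p) := by
      rw [pow_mul, hpq, mul_pow, map_mul, map_pow, <- map_pow j, <- hp, <- hij]
    refine ⟨n * m, hnm, p' ^ m * f p, ?_, key.symm⟩
    intro hone
    exact ha ⟨n * m, hnm, by rw [← map_pow, key, hone, map_one, map_one]⟩
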